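/- Let m and n be positive integers with n odd, and let a_0, a_1, …, a_m and b_0, b_1, …, b_m be integers with a_0 + b_0 = 0. Then for every real number x: det[x + tan(π(a_j+b_k)/n)]_{0≤j,k≤m} − det[tan(π(a_j+b_k)/n)]_{0≤j,k≤m} = x · det[tan(π(a_j+b_k)/n)]_{1≤j,k≤m} · ∏_{k=1}^{m} ( tan(π(a_k+b_0)/n) · tan(π(a_0+b_k)/n) ). -/

import Mathlib

open Real Matrix Finset

/-- tan triple identity -/
lemma tan_triple (A B : ℝ) (hA : Real.cos A ≠ 0) (hB : Real.cos B ≠ 0)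
    (hAB : Real.cos (A + B) ≠ 0) :
    Real.tan (A + B) - Real.tan A - Real.tan B
      = Real.tan (A + B) * Real.tan A * Real.tan B := by
  rw [Real.tan_eq_sin_div_cos, Real.tan_eq_sin_div_cos, Real.tan_eq_sin_div_cos]
  field_simp
  rw [Real.sin_add, Real.cos_add]
  ring

lemma cos_ne_zero_of_odd (n : ℕ) (hn : 0 < n) (hodd : Odd n) (c : ℤ) :
    Real.cos (Real.pi * (c : ℝ) / n) ≠ 0 := by
  intro h
  rw [Real.cos_eq_zero_iff] at h
  obtain ⟨k, hk⟩ := h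
  have hπ : (Real.pi : ℝ) ≠ 0 := Real.pi_ne_zero
  have hn' : (n : ℝ) ≠ 0 := by positivity
  have h1 : (2 * c : ℝ) = (n : ℝ) * (2 * k + 1) := by
    field_simp at hk
    apply mul_left_cancel₀ hπ
    linear_combination π * hk
  have h2 : (2 * c : ℤ) = (n : ℤ) * (2 * k + 1) := by exact_mod_cast h1
  have hoddZ : Odd ((n : ℤ)) := by exact_mod_cast hodd
  have h3 : Odd ((n : ℤ) * (2 * k + 1)) := hoddZ.mul ⟨k, by ring⟩
  rw [← h2] at h3
  exact (Int.not_odd_iff_even.mpr ⟨c, by ring⟩) h3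

lemma sum_helper {m : ℕ} (j : Fin (m + 1)) (f : Fin (m + 1) → ℝ) :
    ∑ i : Fin (m + 1), (if j = i then (1 : ℝ) else if i = 0 then -1 else 0) * f i
      = f j - (if j = 0 then 0 else f 0) := by
  by_cases hj : j = 0
  · subst hj
    rw [Finset.sum_eq_single 0]
    · simp
    · intro i _ hi
      simp [hi, Ne.symm hi]
    · simp
  · have : ∀ i : Fin (m + 1),
        (if j = i then (1 : ℝ) else if i = 0 then -1 else 0) * f i
          = (if i = j then f j else 0) + (if i = 0 then -f 0 else 0) := by
      intro i
      by_cases h1 : i = j <;> by_cases h2 : i = 0 <;> simp_all [eq_comm]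
    rw [Finset.sum_congr rfl fun i _ => this i, Finset.sum_add_distrib,
      Finset.sum_ite_eq', Finset.sum_ite_eq']
    simp [hj]
    ring

/-- row/column reduction -/
lemma det_reduce {m : ℕ} (T : Fin (m + 1) → Fin (m + 1) → ℝ) (x : ℝ) :
    Matrix.det (Matrix.of fun j k => x + T j k) =
    Matrix.det (Matrix.of fun j k : Fin (m + 1) =>
      if j = 0 then (if k = 0 then x + T 0 0 else T 0 k - T 0 0)
      else if k = 0 then T j 0 - T 0 0 else T j k - T 0 k - T j 0 + T 0 0) := by
  set M : Matrix (Fin (m + 1)) (Fin (m + 1)) ℝ := Matrix.of fun j k => x + T j k with hM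
  set E : Matrix (Fin (m + 1)) (Fin (m + 1)) ℝ :=
    Matrix.of fun j k => if j = k then (1 : ℝ) else if k = 0 then -1 else 0 with hE
  have hEdet : E.det = 1 := by
    rw [Matrix.det_of_lowerTriangular E]
    · simp [hE]
    · intro i j hij
      have h3 : i < j := by simpa using hij
      have h1 : i ≠ j := ne_of_lt h3
      have h2 : j ≠ 0 := by
        intro h; subst h; exact absurd h3 (Fin.not_lt_zero i)
      simp [hE, h1, h2]
  have hEM : ∀ j k, (E * M) j k = M j k - (if j = 0 then 0 else M 0 k) := by
    intro j k
    rw [Matrix.mul_apply]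
    have : ∀ i, E j i * M i k = (if j = i then (1:ℝ) else if i = 0 then -1 else 0) * M i k := by
      intro i; simp [hE]
    rw [Finset.sum_congr rfl fun i _ => this i, sum_helper]
  have hFE : ∀ (F : Matrix (Fin (m+1)) (Fin (m+1)) ℝ) j k,
      (F * Eᵀ) j k = F j k - (if k = 0 then 0 else F j 0) := by
    intro F j k
    rw [Matrix.mul_apply]
    have : ∀ i, F j i * Eᵀ i k = (if k = i then (1:ℝ) else if i = 0 then -1 else 0) * F j i := by
      intro i; simp [hE, Matrix.transpose_apply, mul_comm]
    rw [Finset.sum_congr rfl fun i _ => this i, sum_helper]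
  have key : E * M * Eᵀ = Matrix.of fun j k : Fin (m + 1) =>
      if j = 0 then (if k = 0 then x + T 0 0 else T 0 k - T 0 0)
      else if k = 0 then T j 0 - T 0 0 else T j k - T 0 k - T j 0 + T 0 0 := by
    ext j k
    rw [hFE, hEM, hEM]
    by_cases hj : j = 0 <;> by_cases hk : k = 0 <;> simp [hj, hk, hM] <;> ring
  calc M.det = E.det * M.det * Eᵀ.det := by rw [hEdet, Matrix.det_transpose, hEdet]; ring
    _ = (E * M * Eᵀ).det := by rw [Matrix.det_mul, Matrix.det_mul]
    _ = _ := by rw [key]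

/-- Let `m, n` be positive integers with `n` odd, and `a_0,…,a_m`,
`b_0,…,b_m` integers with `a_0 + b_0 = 0`. Then for every real `x`:
`det[x + tan(π(a_j+b_k)/n)]_{0≤j,k≤m} − det[tan(π(a_j+b_k)/n)]_{0≤j,k≤m}
 = x·det[tan(π(a_j+b_k)/n)]_{1≤j,k≤m}·∏_{k=1}^m tan(π(a_k+b_0)/n)·tan(π(a_0+b_k)/n)`. -/
theorem stmt17 (m n : ℕ) (hm : 0 < m) (hn : 0 < n) (hodd : Odd n)
    (a b : Fin (m + 1) → ℤ) (hab : a 0 + b 0 = 0) (x : ℝ) :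
    Matrix.det (Matrix.of fun j k : Fin (m + 1) =>
        x + Real.tan (Real.pi * ((a j + b k : ℤ) : ℝ) / n)) -
      Matrix.det (Matrix.of fun j k : Fin (m + 1) =>
        Real.tan (Real.pi * ((a j + b k : ℤ) : ℝ) / n)) =
    x * Matrix.det (Matrix.of fun j k : Fin m =>
        Real.tan (Real.pi * ((a j.succ + b k.succ : ℤ) : ℝ) / n)) *
      ∏ k : Fin m,
        (Real.tan (Real.pi * ((a k.succ + b 0 : ℤ) : ℝ) / n) *
         Real.tan (Real.pi * ((a 0 + b k.succ : ℤ) : ℝ) / n)) := by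
  set T : Fin (m + 1) → Fin (m + 1) → ℝ :=
    fun j k => Real.tan (Real.pi * ((a j + b k : ℤ) : ℝ) / n) with hT
  have hT00 : T 0 0 = 0 := by
    have h0 : ((a 0 + b 0 : ℤ) : ℝ) = 0 := by rw [hab]; simp
    simp only [hT]
    rw [h0]
    simp
  -- second det equals first at x = 0
  have h2 : Matrix.det (Matrix.of fun j k : Fin (m + 1) => T j k)
      = Matrix.det (Matrix.of fun j k : Fin (m + 1) => (0:ℝ) + T j k) := by
    congr 1; ext j k; simp
  -- the reduced matrix at parameter y
  set N : ℝ → Matrix (Fin (m + 1)) (Fin (m + 1)) ℝ := fun y => Matrix.of fun j k : Fin (m + 1) =>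
      if j = 0 then (if k = 0 then y + T 0 0 else T 0 k - T 0 0)
      else if k = 0 then T j 0 - T 0 0 else T j k - T 0 k - T j 0 + T 0 0 with hN
  have hred : ∀ y : ℝ, Matrix.det (Matrix.of fun j k => y + T j k) = (N y).det :=
    fun y => det_reduce T y
  -- N x = updateRow (N 0) 0 (row + x • single)
  have hrow : N x = Matrix.updateRow (N 0) 0 ((N 0) 0 + x • (Pi.single 0 1 : Fin (m+1) → ℝ)) := by
    ext j k
    by_cases hj : j = 0
    · subst hj
      by_cases hk : k = 0 <;> simp [hN, hk, Pi.single_apply] <;> ring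
    · simp [hN, Matrix.updateRow_ne hj, hj]
  have hdiff : (N x).det - (N 0).det
      = x * (Matrix.updateRow (N 0) 0 (Pi.single 0 1)).det := by
    rw [hrow, Matrix.det_updateRow_add, Matrix.updateRow_eq_self,
      Matrix.det_updateRow_smul]
    ring
  -- expand the cofactor determinant
  set A := Matrix.updateRow (N 0) 0 (Pi.single 0 1 : Fin (m+1) → ℝ) with hA
  have hAexp : A.det = ((A.submatrix Fin.succ Fin.succ).det) := by
    rw [Matrix.det_succ_row_zero]
    rw [Finset.sum_eq_single 0]
    · simp [hA, Fin.succAbove_zero]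
    · intro j _ hj
      have : A 0 j = 0 := by
        simp [hA, Matrix.updateRow_self, Pi.single_apply, hj]
      rw [this]; ring
    · simp
  -- the minor entries
  have hcos : ∀ c : ℤ, Real.cos (Real.pi * (c : ℝ) / n) ≠ 0 :=
    cos_ne_zero_of_odd n hn hodd
  have hminor : ∀ j k : Fin m, (A.submatrix Fin.succ Fin.succ) j k
      = T j.succ 0 * T j.succ k.succ * T 0 k.succ := by
    intro j k
    have hj0 : (Fin.succ j : Fin (m+1)) ≠ 0 := Fin.succ_ne_zero j
    have hk0 : (Fin.succ k : Fin (m+1)) ≠ 0 := Fin.succ_ne_zero k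
    have : (A.submatrix Fin.succ Fin.succ) j k
        = T j.succ k.succ - T 0 k.succ - T j.succ 0 + T 0 0 := by
      simp [hA, Matrix.submatrix_apply, Matrix.updateRow_ne hj0, hN, hj0, hk0]
    rw [this, hT00, add_zero]
    -- tangent identity
    set Aang := Real.pi * ((a j.succ + b 0 : ℤ) : ℝ) / n with hAang
    set Bang := Real.pi * ((a 0 + b k.succ : ℤ) : ℝ) / n with hBang
    have hsum : Aang + Bang = Real.pi * ((a j.succ + b k.succ : ℤ) : ℝ) / n := by
      have hcast : ((a j.succ + b 0 : ℤ) : ℝ) + ((a 0 + b k.succ : ℤ) : ℝ)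
          = ((a j.succ + b k.succ : ℤ) : ℝ) := by
        push_cast
        have h0 : (a 0 : ℝ) + b 0 = 0 := by exact_mod_cast congrArg (fun z : ℤ => (z : ℝ)) hab
        linarith
      rw [hAang, hBang, ← add_div, ← mul_add, hcast]
    have := tan_triple Aang Bang (hcos _) (hcos _) (by rw [hsum]; exact hcos _)
    rw [hsum] at this
    have hTj : T j.succ 0 = Real.tan Aang := rfl
    have hTk : T 0 k.succ = Real.tan Bang := rfl
    have hTjk : T j.succ k.succ = Real.tan (Real.pi * ((a j.succ + b k.succ : ℤ) : ℝ) / n) := rfl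
    rw [hTj, hTk, hTjk]
    linear_combination this
  -- factor the minor
  have hfac : (A.submatrix Fin.succ Fin.succ).det
      = (∏ j : Fin m, T j.succ 0) * (Matrix.of fun j k : Fin m => T j.succ k.succ).det
        * (∏ k : Fin m, T 0 k.succ) := by
    have : A.submatrix Fin.succ Fin.succ
        = Matrix.diagonal (fun j : Fin m => T j.succ 0)
          * (Matrix.of fun j k : Fin m => T j.succ k.succ)
          * Matrix.diagonal (fun k : Fin m => T 0 k.succ) := by
      ext j k
      rw [hminor, Matrix.mul_diagonal, Matrix.diagonal_mul]
      simp
    rw [this, Matrix.det_mul, Matrix.det_mul, Matrix.det_diagonal, Matrix.det_diagonal]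
  -- put it together
  rw [h2, hred, hred, hdiff, hAexp, hfac, Finset.prod_mul_distrib]
  simp only [hT]
  ring
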